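/- For λ ⊢ n, m ∈ ℕ, and semistandard tableaux τ, σ ∈ T_{λ,m}, the polynomial p_{τ,σ}(X) = ∑_{τ'∼τ, σ'∼σ} ∑_{c,c'∈C_λ} sgn(c c') ∏_{y∈Y(λ)} x_{τ'c(y), σ'c'(y)} satisfies p_{τ,σ}(X) = |C_λ| · ∑_{τ'∼τ, σ'∼σ} ∏_{j=1}^{λ_1} det((x_{τ'(i,j), σ'(i',j)})_{i,i'=1}^{λ*_j}). -/

import Mathlib

open Finset Equiv Equiv.Perm

def fiberEquivAux {ι : Type*} {β : ι → Type*} (i : ι) :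
    β i ≃ {x : Σ j, β j // x.1 = i} where
  toFun b := ⟨⟨i, b⟩, rfl⟩
  invFun x := cast (congrArg β x.2) x.1.2
  left_inv b := rfl
  right_inv := by rintro ⟨⟨j, b⟩, rfl⟩; rfl

lemma sigmaCongrRight_mulSingle {ι : Type*} [DecidableEq ι] {β : ι → Type*}
    [∀ i, DecidableEq (β i)] (i : ι) (π : Equiv.Perm (β i)) :
    Equiv.sigmaCongrRight (Pi.mulSingle i π) = π.extendDomain (fiberEquivAux i) := by
  apply Equiv.ext
  rintro ⟨j, b⟩
  by_cases h : j = i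
  · subst h
    rw [Equiv.Perm.extendDomain_apply_subtype _ (fiberEquivAux j) rfl]
    simp [fiberEquivAux, Equiv.sigmaCongrRight]
  · rw [Equiv.Perm.extendDomain_apply_not_subtype _ (fiberEquivAux i) h]
    simp [Equiv.sigmaCongrRight, Pi.mulSingle_eq_of_ne h]

lemma sign_sigmaCongrRight {ι : Type*} [Fintype ι] [DecidableEq ι] {β : ι → Type*}
    [∀ i, Fintype (β i)] [∀ i, DecidableEq (β i)] (κ : ∀ i, Equiv.Perm (β i)) :
    Equiv.Perm.sign (Equiv.sigmaCongrRight κ) = ∏ i, Equiv.Perm.sign (κ i) := by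
  have h := MonoidHom.pi_ext (ι := ι) (M := fun i => Equiv.Perm (β i))
    (f := Equiv.Perm.sign.comp (Equiv.Perm.sigmaCongrRightHom β))
    (g := MonoidHom.mk' (fun κ => ∏ i, Equiv.Perm.sign (κ i))
      (by intro a b; rw [← Finset.prod_mul_distrib]; simp))
    (by
      intro i π
      simp only [MonoidHom.comp_apply, MonoidHom.mk'_apply]
      show Equiv.Perm.sign (Equiv.sigmaCongrRight (Pi.mulSingle i π)) = _
      rw [sigmaCongrRight_mulSingle, Equiv.Perm.sign_extendDomain]
      rw [Fintype.prod_eq_single i (fun j hj => by rw [Pi.mulSingle_eq_of_ne hj, map_one])]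
      rw [Pi.mulSingle_eq_same])
  exact DFunLike.congr_fun h κ
section Tableaux

variable (l : ℕ → ℕ) (t : ℕ) (m : ℕ)

/-- The Young shape of the partition `λ = (l 0 ≥ l 1 ≥ ⋯ ≥ l (t-1))` (written
0-based): the cells `(c, r)` with `r < t` and `c < l r` (`c` the column index,
`r` the row index). -/
def YoungShape : Finset (ℕ × ℕ) :=
  (range (l 0) ×ˢ range t).filter (fun p => p.1 < l p.2)

/-- The row stabilizer `R_λ`: permutations of the shape preserving each row. -/
def rowStab : Finset (Equiv.Perm {p // p ∈ YoungShape l t}) :=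
  univ.filter (fun π => ∀ y, ((π y : ℕ × ℕ)).2 = ((y : ℕ × ℕ)).2)

/-- The column stabilizer `C_λ`: permutations of the shape preserving each
column. -/
def colStab : Finset (Equiv.Perm {p // p ∈ YoungShape l t}) :=
  univ.filter (fun π => ∀ y, ((π y : ℕ × ℕ)).1 = ((y : ℕ × ℕ)).1)

/-- The row-equivalence class `{τ' : τ' ∼ τ}` of a tableau
`τ : Y(λ) → [m]`, consisting of the tableaux `τ ∘ r` for `r ∈ R_λ`. -/
def rowClass (τ : {p // p ∈ YoungShape l t} → Fin m) :
    Finset ({p // p ∈ YoungShape l t} → Fin m) :=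
  (rowStab l t).image (fun r => fun y => τ (r y))

/-- `τ` is semistandard: entries nondecreasing along rows and strictly
increasing down columns. -/
def IsSemistandard (τ : {p // p ∈ YoungShape l t} → Fin m) : Prop :=
  (∀ p p' : {p // p ∈ YoungShape l t}, ((p : ℕ × ℕ)).2 = ((p' : ℕ × ℕ)).2 →
    ((p : ℕ × ℕ)).1 ≤ ((p' : ℕ × ℕ)).1 → τ p ≤ τ p') ∧
  (∀ p p' : {p // p ∈ YoungShape l t}, ((p : ℕ × ℕ)).1 = ((p' : ℕ × ℕ)).1 →
    ((p : ℕ × ℕ)).2 < ((p' : ℕ × ℕ)).2 → τ p < τ p')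

/-- Extension of a tableau to all of `ℕ × ℕ` (with junk value outside the
shape), convenient for indexing. -/
def extTab (hm : 0 < m) (τ : {p // p ∈ YoungShape l t} → Fin m) : ℕ × ℕ → Fin m :=
  fun p => if h : p ∈ YoungShape l t then τ ⟨p, h⟩ else ⟨0, hm⟩

/-- The height `λ*_c` of column `c` of the shape. -/
def colHeight (c : ℕ) : ℕ := ((range t).filter (fun r => c < l r)).card

end Tableaux

section Shape

variable {l : ℕ → ℕ} {t : ℕ}

lemma mem_youngShape_iff (hl0 : ∀ r, t ≤ r → l r = 0) (hanti : Antitone l) {p : ℕ × ℕ} :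
    p ∈ YoungShape l t ↔ p.1 < l p.2 := by
  simp only [YoungShape, mem_filter, mem_product, mem_range]
  constructor
  · rintro ⟨_, h⟩; exact h
  · intro h
    refine ⟨⟨lt_of_lt_of_le h (hanti (Nat.zero_le _)), ?_⟩, h⟩
    by_contra hr
    push_neg at hr
    rw [hl0 _ hr] at h
    omega

lemma lt_colHeight_iff (hl0 : ∀ r, t ≤ r → l r = 0) (hanti : Antitone l) {j r : ℕ} :
    r < colHeight l t j ↔ j < l r := by
  constructor
  · intro h
    by_contra hc
    push_neg at hc
    have hsub : ((range t).filter (fun r' => j < l r')) ⊆ range r := by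
      intro s hs
      simp only [mem_filter, mem_range] at hs ⊢
      by_contra hsr
      push_neg at hsr
      exact absurd (lt_of_lt_of_le hs.2 (hanti hsr)) (not_lt.2 hc)
    have := card_le_card hsub
    simp only [card_range] at this
    exact absurd (lt_of_lt_of_le h this) (lt_irrefl r)
  · intro h
    have hrt : r < t := by
      by_contra hrt
      push_neg at hrt
      rw [hl0 _ hrt] at h
      omega
    have hsub : range (r + 1) ⊆ (range t).filter (fun r' => j < l r') := by
      intro s hs
      simp only [mem_range] at hs
      simp only [mem_filter, mem_range]
      exact ⟨lt_of_lt_of_le (Nat.lt_of_lt_of_le hs (Nat.succ_le_of_lt hrt)) le_rfl,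
        lt_of_lt_of_le h (hanti (Nat.lt_succ_iff.mp hs))⟩
    have := card_le_card hsub
    simpa [colHeight] using this

/-- The equivalence between the shape and the disjoint union of its columns. -/
def shapeEquiv (hl0 : ∀ r, t ≤ r → l r = 0) (hanti : Antitone l) :
    {p // p ∈ YoungShape l t} ≃ Σ j : Fin (l 0), Fin (colHeight l t (j : ℕ)) where
  toFun y := ⟨⟨(y : ℕ × ℕ).1,
      lt_of_lt_of_le ((mem_youngShape_iff hl0 hanti).mp y.2) (hanti (Nat.zero_le _))⟩,
    ⟨(y : ℕ × ℕ).2, (lt_colHeight_iff hl0 hanti).mpr ((mem_youngShape_iff hl0 hanti).mp y.2)⟩⟩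
  invFun x := ⟨((x.1 : ℕ), (x.2 : ℕ)),
    (mem_youngShape_iff hl0 hanti).mpr ((lt_colHeight_iff hl0 hanti).mp x.2.isLt)⟩
  left_inv y := rfl
  right_inv x := rfl

lemma mem_colStab_iff {c : Equiv.Perm {p // p ∈ YoungShape l t}} :
    c ∈ colStab l t ↔ ∀ y, ((c y : ℕ × ℕ)).1 = ((y : ℕ × ℕ)).1 := by
  simp [colStab]

lemma colStab_inv_mem {c : Equiv.Perm {p // p ∈ YoungShape l t}} (hc : c ∈ colStab l t) :
    c⁻¹ ∈ colStab l t := by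
  rw [mem_colStab_iff] at hc ⊢
  intro y
  conv_rhs => rw [← show c (c⁻¹ y) = y from Equiv.apply_symm_apply c y]
  rw [hc]

lemma colStab_mul_mem {c c' : Equiv.Perm {p // p ∈ YoungShape l t}}
    (hc : c ∈ colStab l t) (hc' : c' ∈ colStab l t) : c * c' ∈ colStab l t := by
  rw [mem_colStab_iff] at hc hc' ⊢
  intro y
  rw [Equiv.Perm.mul_apply, hc, hc']

lemma extTab_coe {m : ℕ} (hm : 0 < m) (f : {p // p ∈ YoungShape l t} → Fin m)
    (y : {p // p ∈ YoungShape l t}) : extTab l t m hm f (y : ℕ × ℕ) = f y :=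
  dif_pos y.2

end Shape

section ColPerm

variable {l : ℕ → ℕ} {t : ℕ}

lemma colPerm_aux (hl0 : ∀ r, t ≤ r → l r = 0) (hanti : Antitone l)
    {d : Equiv.Perm {p // p ∈ YoungShape l t}} (hd : d ∈ colStab l t)
    (j : Fin (l 0)) (i : Fin (colHeight l t (j : ℕ))) :
    ((d ((shapeEquiv hl0 hanti).symm ⟨j, i⟩) : ℕ × ℕ)).2 < colHeight l t (j : ℕ) := by
  set y := (shapeEquiv hl0 hanti).symm ⟨j, i⟩ with hy
  have h1 := (mem_youngShape_iff hl0 hanti).mp (d y).2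
  rw [mem_colStab_iff.mp hd y] at h1
  have h2 : ((y : ℕ × ℕ)).1 = (j : ℕ) := rfl
  rw [h2] at h1
  exact (lt_colHeight_iff hl0 hanti).mpr h1

lemma cell_eq_apply (hl0 : ∀ r, t ≤ r → l r = 0) (hanti : Antitone l)
    {d : Equiv.Perm {p // p ∈ YoungShape l t}} (hd : d ∈ colStab l t)
    (j : Fin (l 0)) (y : {p // p ∈ YoungShape l t}) (hy1 : ((y : ℕ × ℕ)).1 = (j : ℕ))
    (h : ((d y : ℕ × ℕ)).2 < colHeight l t (j : ℕ)) :
    (shapeEquiv hl0 hanti).symm ⟨j, ⟨((d y : ℕ × ℕ)).2, h⟩⟩ = d y := by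
  apply Subtype.ext
  apply Prod.ext
  · exact (hy1 ▸ (mem_colStab_iff.mp hd y)).symm
  · rfl

/-- The restriction of a column-preserving permutation to column `j`. -/
def colPerm (hl0 : ∀ r, t ≤ r → l r = 0) (hanti : Antitone l)
    (d : Equiv.Perm {p // p ∈ YoungShape l t}) (hd : d ∈ colStab l t)
    (j : Fin (l 0)) : Equiv.Perm (Fin (colHeight l t (j : ℕ))) where
  toFun i := ⟨((d ((shapeEquiv hl0 hanti).symm ⟨j, i⟩) : ℕ × ℕ)).2, colPerm_aux hl0 hanti hd j i⟩
  invFun i := ⟨((d⁻¹ ((shapeEquiv hl0 hanti).symm ⟨j, i⟩) : ℕ × ℕ)).2,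
    colPerm_aux hl0 hanti (colStab_inv_mem hd) j i⟩
  left_inv i := by
    apply Fin.ext
    simp only
    rw [cell_eq_apply hl0 hanti hd j _ rfl, Equiv.Perm.coe_inv, Equiv.symm_apply_apply]
    rfl
  right_inv i := by
    apply Fin.ext
    simp only
    rw [cell_eq_apply hl0 hanti (colStab_inv_mem hd) j _ rfl, Equiv.Perm.coe_inv, Equiv.apply_symm_apply]
    rfl

lemma permCongr_colPerm (hl0 : ∀ r, t ≤ r → l r = 0) (hanti : Antitone l)
    (d : Equiv.Perm {p // p ∈ YoungShape l t}) (hd : d ∈ colStab l t) :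
    (shapeEquiv hl0 hanti).permCongr d = Equiv.sigmaCongrRight (colPerm hl0 hanti d hd) := by
  apply Equiv.ext
  rintro ⟨j, i⟩
  have h1 : ((shapeEquiv hl0 hanti).permCongr d) ⟨j, i⟩
      = (shapeEquiv hl0 hanti) (d ((shapeEquiv hl0 hanti).symm ⟨j, i⟩)) := by
    simp [Equiv.permCongr_apply]
  rw [h1]
  set y := (shapeEquiv hl0 hanti).symm ⟨j, i⟩ with hy
  refine Sigma.ext ?_ ?_
  · apply Fin.ext
    exact mem_colStab_iff.mp hd y
  · rw [Fin.heq_ext_iff]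
    · rfl
    · exact congrArg (fun a => colHeight l t a) (mem_colStab_iff.mp hd y)

lemma sign_eq_prod_colPerm (hl0 : ∀ r, t ≤ r → l r = 0) (hanti : Antitone l)
    (d : Equiv.Perm {p // p ∈ YoungShape l t}) (hd : d ∈ colStab l t) :
    Equiv.Perm.sign d = ∏ j : Fin (l 0), Equiv.Perm.sign (colPerm hl0 hanti d hd j) := by
  rw [← sign_sigmaCongrRight, ← permCongr_colPerm hl0 hanti d hd,
    Equiv.Perm.sign_permCongr]

end ColPerm

section KeyLemma

variable {l : ℕ → ℕ} {t : ℕ} {m : ℕ}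

lemma detProd_eq (hl0 : ∀ r, t ≤ r → l r = 0) (hanti : Antitone l) (hm : 0 < m)
    (f g : {p // p ∈ YoungShape l t} → Fin m) (X : Fin m → Fin m → ℝ) :
    ∑ d ∈ colStab l t, ((Equiv.Perm.sign d : ℤ) : ℝ) *
        ∏ y : {p // p ∈ YoungShape l t}, X (f y) (g (d y))
    = ∏ j ∈ range (l 0), Matrix.det (Matrix.of fun i i' : Fin (colHeight l t j) =>
        X (extTab l t m hm f (j, (i : ℕ))) (extTab l t m hm g (j, (i' : ℕ)))) := by
  rw [← Fin.prod_univ_eq_prod_range (fun j => Matrix.det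
    (Matrix.of fun i i' : Fin (colHeight l t j) =>
      X (extTab l t m hm f (j, (i : ℕ))) (extTab l t m hm g (j, (i' : ℕ))))) (l 0)]
  simp_rw [Matrix.det_apply']
  rw [Fintype.prod_sum]
  refine Finset.sum_bij' (fun d hd => fun j => (colPerm hl0 hanti d hd j)⁻¹)
    (fun κ _ => (shapeEquiv hl0 hanti).symm.permCongr
      (Equiv.sigmaCongrRight (fun j => (κ j)⁻¹))) ?_ ?_ ?_ ?_ ?_
  · intro d hd; exact mem_univ _
  · intro κ _
    exact mem_colStab_iff.mpr fun y => rfl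
  · intro d hd
    simp only [inv_inv]
    rw [← permCongr_colPerm hl0 hanti d hd]
    apply Equiv.ext
    intro y
    simp [Equiv.permCongr_apply]
  · intro κ _
    funext j
    rw [inv_eq_iff_eq_inv]
    apply Equiv.ext
    intro i
    apply Fin.ext
    simp only [colPerm, Equiv.coe_fn_mk, Equiv.permCongr_apply, Equiv.symm_symm,
      Equiv.apply_symm_apply, Equiv.sigmaCongrRight]
    rfl
  · intro d hd
    have hsign := sign_eq_prod_colPerm hl0 hanti d hd
    have hsignr : ((Equiv.Perm.sign d : ℤ) : ℝ)
        = ∏ j : Fin (l 0), ((Equiv.Perm.sign ((colPerm hl0 hanti d hd j)⁻¹) : ℤ) : ℝ) := by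
      simp_rw [Equiv.Perm.sign_inv]
      rw [hsign, ← Units.coeHom_apply, map_prod, Int.cast_prod]
      rfl
    have hprod : (∏ y : {p // p ∈ YoungShape l t}, X (f y) (g (d y)))
        = ∏ j : Fin (l 0), ∏ i : Fin (colHeight l t (j : ℕ)),
            (Matrix.of fun i i' : Fin (colHeight l t (j : ℕ)) =>
              X (extTab l t m hm f ((j : ℕ), (i : ℕ))) (extTab l t m hm g ((j : ℕ), (i' : ℕ))))
            (((colPerm hl0 hanti d hd j)⁻¹) i) i := by
      rw [← Equiv.prod_comp (shapeEquiv hl0 hanti).symm (fun y => X (f y) (g (d y)))]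
      rw [← Finset.univ_sigma_univ, Finset.prod_sigma]
      refine Finset.prod_congr rfl fun j _ => ?_
      rw [← Equiv.prod_comp (colPerm hl0 hanti d hd j)
        (fun i => (Matrix.of fun i i' : Fin (colHeight l t (j : ℕ)) =>
          X (extTab l t m hm f ((j : ℕ), (i : ℕ))) (extTab l t m hm g ((j : ℕ), (i' : ℕ))))
          (((colPerm hl0 hanti d hd j)⁻¹) i) i)]
      refine Finset.prod_congr rfl fun i _ => ?_
      rw [Equiv.Perm.coe_inv, Equiv.symm_apply_apply, Matrix.of_apply]
      congr 1
      · exact (extTab_coe hm f _).symm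
      · rw [← cell_eq_apply hl0 hanti hd j _ rfl (colPerm_aux hl0 hanti hd j i)]
        exact (extTab_coe hm g _).symm
    rw [hsignr, hprod, ← Finset.prod_mul_distrib]

lemma key_sum (hl0 : ∀ r, t ≤ r → l r = 0) (hanti : Antitone l) (hm : 0 < m)
    (f g : {p // p ∈ YoungShape l t} → Fin m) (X : Fin m → Fin m → ℝ) :
    ∑ c ∈ colStab l t, ∑ c' ∈ colStab l t,
      (((Equiv.Perm.sign c : ℤ) * (Equiv.Perm.sign c' : ℤ) : ℤ) : ℝ) *
        ∏ y : {p // p ∈ YoungShape l t}, X (f (c y)) (g (c' y))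
    = ((colStab l t).card : ℝ) *
        ∏ j ∈ range (l 0), Matrix.det (Matrix.of fun i i' : Fin (colHeight l t j) =>
          X (extTab l t m hm f (j, (i : ℕ))) (extTab l t m hm g (j, (i' : ℕ)))) := by
  have hA : ∀ c ∈ colStab l t,
      (∑ c' ∈ colStab l t,
        (((Equiv.Perm.sign c : ℤ) * (Equiv.Perm.sign c' : ℤ) : ℤ) : ℝ) *
          ∏ y : {p // p ∈ YoungShape l t}, X (f (c y)) (g (c' y)))
      = ∑ d ∈ colStab l t, ((Equiv.Perm.sign d : ℤ) : ℝ) *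
          ∏ y : {p // p ∈ YoungShape l t}, X (f y) (g (d y)) := by
    intro c hc
    refine Finset.sum_bij' (fun c' _ => c' * c⁻¹) (fun d _ => d * c) ?_ ?_ ?_ ?_ ?_
    · intro a ha; exact colStab_mul_mem ha (colStab_inv_mem hc)
    · intro a ha; exact colStab_mul_mem ha hc
    · intro a _; simp [mul_assoc]
    · intro a _; simp [mul_assoc]
    · intro c' _
      have hs : Equiv.Perm.sign (c' * c⁻¹) = Equiv.Perm.sign c * Equiv.Perm.sign c' := by
        simp [mul_comm]
      have hp : ∏ y : {p // p ∈ YoungShape l t}, X (f y) (g ((c' * c⁻¹) y))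
          = ∏ y : {p // p ∈ YoungShape l t}, X (f (c y)) (g (c' y)) := by
        rw [← Equiv.prod_comp c (fun y => X (f y) (g ((c' * c⁻¹) y)))]
        refine Finset.prod_congr rfl fun y _ => ?_
        congr 2
        simp [Equiv.Perm.mul_apply]
      rw [hs, hp]
      push_cast
      ring
  rw [Finset.sum_congr rfl hA, Finset.sum_const, nsmul_eq_mul,
    detProd_eq hl0 hanti hm f g X]

end KeyLemma
/-- for a partition `λ ⊢ n` of height `t` (row lengths
`l 0 ≥ l 1 ≥ ⋯`) and semistandard tableaux `τ, σ ∈ T_{λ,m}`, the polynomial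
`p_{τ,σ}(X) = ∑_{τ'∼τ, σ'∼σ} ∑_{c,c'∈C_λ} sgn(c c') ∏_{y∈Y(λ)} x_{τ'c(y), σ'c'(y)}`
equals `|C_λ| · ∑_{τ'∼τ, σ'∼σ} ∏_{j} det((x_{τ'(i,j), σ'(i',j)})_{i,i'=1}^{λ*_j})`,
the product running over the columns `j` of the shape. -/
theorem ptausigma_eq_det_form
    (n t m : ℕ) (hm : 0 < m) (l : ℕ → ℕ)
    (hl0 : ∀ r, t ≤ r → l r = 0)
    (hlpos : ∀ r, r < t → 0 < l r)
    (hanti : Antitone l)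
    (hsum : ∑ r ∈ range t, l r = n)
    (τ σ : {p // p ∈ YoungShape l t} → Fin m)
    (hτ : IsSemistandard l t m τ) (hσ : IsSemistandard l t m σ)
    (X : Fin m → Fin m → ℝ) :
    ∑ τ' ∈ rowClass l t m τ, ∑ σ' ∈ rowClass l t m σ,
      ∑ c ∈ colStab l t, ∑ c' ∈ colStab l t,
        (((Equiv.Perm.sign c : ℤ) * (Equiv.Perm.sign c' : ℤ) : ℤ) : ℝ) *
          ∏ y : {p // p ∈ YoungShape l t}, X (τ' (c y)) (σ' (c' y))
    = ((colStab l t).card : ℝ) *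
        ∑ τ' ∈ rowClass l t m τ, ∑ σ' ∈ rowClass l t m σ,
          ∏ j ∈ range (l 0),
            Matrix.det (Matrix.of
              (fun i i' : Fin (colHeight l t j) =>
                X (extTab l t m hm τ' (j, (i : ℕ)))
                  (extTab l t m hm σ' (j, (i' : ℕ))))) := by
  rw [Finset.mul_sum]
  refine Finset.sum_congr rfl fun τ' _ => ?_
  rw [Finset.mul_sum]
  refine Finset.sum_congr rfl fun σ' _ => ?_
  exact key_sum hl0 hanti hm τ' σ' X
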